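/- Let θ and ρ be two distinct nontrivial equivalence relations on E_k satisfying either (a) θ ⊊ ρ or ρ ⊊ θ, or (b) ρ ∩ θ = Δ and ρ ∘ θ = E_k². Then Pol(θ) ∩ Pol(ρ) contains a majority operation, i.e., a ternary operation m on E_k with m(x,x,y) = m(x,y,x) = m(y,x,x) = x for all x, y ∈ E_k. -/

import Mathlib

/-- A finitary operation on `Fin k`: a pair of an arity `n` and a function
`(Fin n → Fin k) → Fin k`. -/
abbrev Ops (k : ℕ) := Σ n : ℕ, ((Fin n → Fin k) → Fin k)

/-- The set of finitary operations preserving a binary relation `θ` on `Fin k`. -/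
def PolB {k : ℕ} (θ : Set (Fin k × Fin k)) : Set (Ops k) :=
  {f | ∀ a b : Fin f.1 → Fin k, (∀ i, (a i, b i) ∈ θ) → (f.2 a, f.2 b) ∈ θ}

/-- The set of finitary operations preserving an `h`-ary relation `ρ` on `Fin k`. -/
def PolH {k h : ℕ} (ρ : Set (Fin h → Fin k)) : Set (Ops k) :=
  {f | ∀ M : Fin h → Fin f.1 → Fin k,
    (∀ i, (fun j => M j i) ∈ ρ) → (fun j => f.2 (M j)) ∈ ρ}

/-- A clone: contains all projections and is closed under composition. -/
def IsClone {k : ℕ} (C : Set (Ops k)) : Prop :=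
  (∀ (n : ℕ) (i : Fin n), (⟨n, fun x => x i⟩ : Ops k) ∈ C) ∧
  (∀ (n m : ℕ) (f : (Fin n → Fin k) → Fin k) (g : Fin n → (Fin m → Fin k) → Fin k),
    (⟨n, f⟩ : Ops k) ∈ C → (∀ i, (⟨m, g i⟩ : Ops k) ∈ C) →
    (⟨m, fun x => f fun i => g i x⟩ : Ops k) ∈ C)

/-- `C` is maximal in `D`: `C ⊊ D` and no clone lies strictly between them. -/
def MaximalIn {k : ℕ} (C D : Set (Ops k)) : Prop :=
  C ⊂ D ∧ ∀ F : Set (Ops k), IsClone F → ¬(C ⊂ F ∧ F ⊂ D)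

/-- `θ` is an equivalence relation (as a set of pairs). -/
def IsEquivRel {A : Type*} (θ : Set (A × A)) : Prop :=
  (∀ a, (a, a) ∈ θ) ∧ (∀ a b, (a, b) ∈ θ → (b, a) ∈ θ) ∧
    (∀ a b c, (a, b) ∈ θ → (b, c) ∈ θ → (a, c) ∈ θ)

/-- The diagonal relation `Δ` on `Fin k`. -/
def diag (k : ℕ) : Set (Fin k × Fin k) := {p | p.1 = p.2}

/-- A nontrivial equivalence relation: `Δ ⊊ θ ⊊ (Fin k)²`. -/
def NontrivEquiv {k : ℕ} (θ : Set (Fin k × Fin k)) : Prop :=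
  IsEquivRel θ ∧ diag k ⊂ θ ∧ θ ⊂ Set.univ

/-- Relational composition `α ∘ β = {(a,c) : ∃ b, (a,b) ∈ α ∧ (b,c) ∈ β}`. -/
def relComp {k : ℕ} (α β : Set (Fin k × Fin k)) : Set (Fin k × Fin k) :=
  {p | ∃ b, (p.1, b) ∈ α ∧ (b, p.2) ∈ β}

/-- The set of equivalence classes of `θ`. -/
def classesOf {A : Type*} (θ : Set (A × A)) : Set (Set A) :=
  {S | ∃ a : A, S = {b | (a, b) ∈ θ}}

/-- Totally reflexive: every tuple with a repeated entry is in `ρ`. -/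
def TotallyReflexive {k h : ℕ} (ρ : Set (Fin h → Fin k)) : Prop :=
  ∀ v : Fin h → Fin k, (∃ i j : Fin h, i ≠ j ∧ v i = v j) → v ∈ ρ

/-- Totally symmetric: closed under all permutations of coordinates. -/
def TotallySymmetric {k h : ℕ} (ρ : Set (Fin h → Fin k)) : Prop :=
  ∀ (v : Fin h → Fin k) (σ : Equiv.Perm (Fin h)), v ∈ ρ → v ∘ ⇑σ ∈ ρ

/-- The center of an `h`-ary relation: elements `a` such that every tuple whose
first coordinate is `a` lies in `ρ`. -/
def center {k h : ℕ} (ρ : Set (Fin h → Fin k)) : Set (Fin k) :=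
  {a | ∀ v : Fin h → Fin k, (∀ i : Fin h, (i : ℕ) = 0 → v i = a) → v ∈ ρ}

/-- An `h`-ary central relation. -/
def IsCentralRel {k h : ℕ} (ρ : Set (Fin h → Fin k)) : Prop :=
  ρ ≠ Set.univ ∧ TotallyReflexive ρ ∧ TotallySymmetric ρ ∧ (center ρ).Nonempty

/-- `η = {(u₁,…,u_h) : (u₁,u₂) ∈ θ}` (0-indexed: first two coordinates θ-related). -/
def eta {k : ℕ} (h : ℕ) (θ : Set (Fin k × Fin k)) : Set (Fin h → Fin k) :=
  {v | ∀ i j : Fin h, (i : ℕ) = 0 → (j : ℕ) = 1 → (v i, v j) ∈ θ}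

/-- `ρ_{l,θ}`: tuples whose coordinates from position `l` onwards can be moved
inside their θ-classes so as to land in `ρ` (0-indexed coordinates). -/
def rhoTh {k h : ℕ} (l : ℕ) (θ : Set (Fin k × Fin k)) (ρ : Set (Fin h → Fin k)) :
    Set (Fin h → Fin k) :=
  {a | ∃ u : Fin h → Fin k, (∀ j : Fin h, l ≤ (j : ℕ) → (u j, a j) ∈ θ) ∧
    (fun j : Fin h => if (j : ℕ) < l then a j else u j) ∈ ρ}

/-- `ρ` is θ-closed: `ρ = ρ_{0,θ}`. -/
def ThetaClosed {k h : ℕ} (θ : Set (Fin k × Fin k)) (ρ : Set (Fin h → Fin k)) : Prop :=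
  ρ = rhoTh 0 θ ρ

/-- `γ_σ = {(a_{σ(1)},…,a_{σ(h)}) : a ∈ γ}`. -/
def permuted {k h : ℕ} (σ : Equiv.Perm (Fin h)) (γ : Set (Fin h → Fin k)) :
    Set (Fin h → Fin k) :=
  {w | w ∘ ⇑σ.symm ∈ γ}

/-- A transversal of order `l` for the θ-classes: a system of representatives
(pairwise θ-unrelated, meeting every class) such that every tuple whose
coordinates from position `l` onwards lie in `T` belongs to `ρ`. -/
def IsTransversal {k h : ℕ} (θ : Set (Fin k × Fin k)) (ρ : Set (Fin h → Fin k)) (l : ℕ)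
    (T : Set (Fin k)) : Prop :=
  (∀ u ∈ T, ∀ v ∈ T, u ≠ v → (u, v) ∉ θ) ∧
  (∀ a : Fin k, ∃ u ∈ T, (a, u) ∈ θ) ∧
  (∀ w : Fin h → Fin k, (∀ j : Fin h, l ≤ (j : ℕ) → w j ∈ T) → w ∈ ρ)

/-- `ρ` is weakly θ-closed of order `l` (`1 ≤ l ≤ h-1`). -/
def WeaklyThetaClosed {k h : ℕ} (θ : Set (Fin k × Fin k)) (ρ : Set (Fin h → Fin k))
    (l : ℕ) : Prop :=
  1 ≤ l ∧ l ≤ h - 1 ∧ (∃ T : Set (Fin k), IsTransversal θ ρ (l - 1) T) ∧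
  ρ = ⋂ σ : Equiv.Perm (Fin h), permuted σ (rhoTh l θ ρ)

/-- Type I: `η ⊆ ρ` and every θ-class contains a central element of `ρ`. -/
def TypeI {k h : ℕ} (θ : Set (Fin k × Fin k)) (ρ : Set (Fin h → Fin k)) : Prop :=
  eta h θ ⊆ ρ ∧ ∀ a : Fin k, ∃ c : Fin k, (a, c) ∈ θ ∧ c ∈ center ρ

/-- Type II: `ρ` is θ-closed. -/
def TypeII {k h : ℕ} (θ : Set (Fin k × Fin k)) (ρ : Set (Fin h → Fin k)) : Prop :=
  ThetaClosed θ ρ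

/-- Type III: `ρ` is weakly θ-closed of some order and `η ⊆ ρ`. -/
def TypeIII {k h : ℕ} (θ : Set (Fin k × Fin k)) (ρ : Set (Fin h → Fin k)) : Prop :=
  (∃ l : ℕ, WeaklyThetaClosed θ ρ l) ∧ eta h θ ⊆ ρ

/-- `τ` is a diagonal relation through `θ`. -/
def IsDiagonal {k h : ℕ} (θ : Set (Fin k × Fin k)) (τ : Set (Fin h → Fin k)) : Prop :=
  ∃ (ε₁ : Setoid (Fin h)) (ε₂ : Set (Fin h × Fin h)),
    (∀ p ∈ ε₂, (∀ j, ε₁.r p.1 j → p.1 ≤ j) ∧ (∀ j, ε₁.r p.2 j → p.2 ≤ j)) ∧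
    (∀ i : Fin h, (∀ j, ε₁.r i j → i ≤ j) → (i, i) ∈ ε₂) ∧
    (∀ i j, (i, j) ∈ ε₂ → (j, i) ∈ ε₂) ∧
    (∀ i j l, (i, j) ∈ ε₂ → (j, l) ∈ ε₂ → (i, l) ∈ ε₂) ∧
    τ = {a | (∀ i j, ε₁.r i j → a i = a j) ∧ (∀ i j, (i, j) ∈ ε₂ → (a i, a j) ∈ θ)}

/-- `ρ^l_{0,θ}`: `l`-tuples which can be moved inside their θ-classes so that
every `h`-tuple with all entries among the moved elements lies in `ρ`. -/
def rhoPow {k h : ℕ} (l : ℕ) (θ : Set (Fin k × Fin k)) (ρ : Set (Fin h → Fin k)) :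
    Set (Fin l → Fin k) :=
  {u | ∃ e : Fin l → Fin k, (∀ i, (e i, u i) ∈ θ) ∧
    ∀ w : Fin h → Fin k, (∀ j, ∃ i, w j = e i) → w ∈ ρ}

/-- An `h`-regular family of equivalence relations. -/
def IsHRegFamily {A : Type*} (h : ℕ) {m : ℕ} (T : Fin m → Set (A × A)) : Prop :=
  (∀ i, IsEquivRel (T i)) ∧
  (∀ i, (classesOf (T i)).ncard = h) ∧
  (∀ x : Fin m → A, (⋂ i, {b | (x i, b) ∈ T i}).Nonempty)

/-- The `h`-regular relation determined by the family `T`: tuples whose set of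
components meets at most `h-1` classes of each member of the family. -/
def hRegRel {A : Type*} (h : ℕ) {m : ℕ} (T : Fin m → Set (A × A)) : Set (Fin h → A) :=
  {a | ∀ i : Fin m, {S ∈ classesOf (T i) | ∃ j : Fin h, a j ∈ S}.ncard ≤ h - 1}

/-- `ρ` is an `h`-regular relation: determined by some `h`-regular family. -/
def IsHRegularRel {A : Type*} (h : ℕ) (ρ : Set (Fin h → A)) : Prop :=
  ∃ m : ℕ, 1 ≤ m ∧ ∃ T : Fin m → Set (A × A), IsHRegFamily h T ∧ ρ = hRegRel h T

section AuxMaj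

variable {k : ℕ}

lemma equiv_transfer {σ : Set (Fin k × Fin k)} (hσ : IsEquivRel σ)
    {p q r s : Fin k} (hp : (p, r) ∈ σ) (hq : (q, s) ∈ σ) :
    (p, q) ∈ σ ↔ (r, s) ∈ σ :=
  ⟨fun h => hσ.2.2 _ _ _ (hσ.2.1 _ _ hp) (hσ.2.2 _ _ _ h hq),
   fun h => hσ.2.2 _ _ _ hp (hσ.2.2 _ _ _ h (hσ.2.1 _ _ hq))⟩

open Classical in
/-- A hierarchical dual-discriminator for nested equivalences `θ ⊆ ρ`. -/
noncomputable def mNest (θ ρ : Set (Fin k × Fin k)) (x : Fin 3 → Fin k) : Fin k :=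
  if (x 0, x 1) ∈ ρ ∧ (x 0, x 2) ∈ ρ then
    (if (x 0, x 1) ∈ θ then
        (if (x 0, x 2) ∈ θ then (if x 0 = x 1 then x 0 else x 2) else x 0)
     else if (x 1, x 2) ∈ θ then x 1 else x 0)
  else if (x 0, x 1) ∈ ρ then x 0
  else if (x 1, x 2) ∈ ρ then x 1
  else x 0

lemma mNest_maj (θ ρ : Set (Fin k × Fin k)) (hθ : IsEquivRel θ) (hρ : IsEquivRel ρ)
    (x y : Fin k) :
    mNest θ ρ ![x, x, y] = x ∧ mNest θ ρ ![x, y, x] = x ∧ mNest θ ρ ![y, x, x] = x := by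
  obtain ⟨hθr, hθs, hθt⟩ := hθ
  obtain ⟨hρr, hρs, hρt⟩ := hρ
  refine ⟨?_, ?_, ?_⟩ <;>
    · simp only [mNest, Matrix.cons_val_zero, Matrix.cons_val_one, Matrix.head_cons,
        Matrix.cons_val_two, Matrix.tail_cons, Matrix.vecHead, Matrix.vecTail, Function.comp_apply, Fin.succ_zero_eq_one]
      split_ifs <;> first
        | rfl
        | assumption
        | (exfalso; solve_by_elim)
        | grind

lemma mNest_spec_rho (θ ρ : Set (Fin k × Fin k)) (hρ : IsEquivRel ρ) (x : Fin 3 → Fin k) :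
    ((x 0, x 1) ∈ ρ → (mNest θ ρ x, x 0) ∈ ρ) ∧
    ((x 0, x 1) ∉ ρ → (x 1, x 2) ∈ ρ → mNest θ ρ x = x 1) ∧
    ((x 0, x 1) ∉ ρ → (x 1, x 2) ∉ ρ → mNest θ ρ x = x 0) := by
  obtain ⟨hρr, hρs, hρt⟩ := hρ
  unfold mNest
  split_ifs with h1 h2 h3 h4 h5 h6 <;>
    refine ⟨fun _ => ?_, fun _ _ => ?_, fun _ _ => ?_⟩ <;>
    first
      | rfl
      | exact hρr _
      | exact hρs _ _ h1.1
      | exact hρs _ _ h1.2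
      | (exfalso; tauto)

lemma mNest_spec_theta (θ ρ : Set (Fin k × Fin k)) (hθ : IsEquivRel θ) (x : Fin 3 → Fin k)
    (h1 : (x 0, x 1) ∈ ρ ∧ (x 0, x 2) ∈ ρ) :
    ((x 0, x 1) ∈ θ → (mNest θ ρ x, x 0) ∈ θ) ∧
    ((x 0, x 1) ∉ θ → (x 1, x 2) ∈ θ → mNest θ ρ x = x 1) ∧
    ((x 0, x 1) ∉ θ → (x 1, x 2) ∉ θ → mNest θ ρ x = x 0) := by
  obtain ⟨hθr, hθs, hθt⟩ := hθ
  unfold mNest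
  rw [if_pos h1]
  split_ifs with h2 h3 h4 h5 <;>
    refine ⟨fun _ => ?_, fun _ _ => ?_, fun _ _ => ?_⟩ <;>
    first
      | rfl
      | exact hθr _
      | exact hθs _ _ h2
      | exact hθs _ _ h3
      | (exfalso; tauto)

lemma mNest_polB_rho (θ ρ : Set (Fin k × Fin k)) (hρ : IsEquivRel ρ) :
    (⟨3, mNest θ ρ⟩ : Ops k) ∈ PolB ρ := by
  intro a b hab
  show (mNest θ ρ a, mNest θ ρ b) ∈ ρ
  obtain ⟨hρr, hρs, hρt⟩ := hρ
  have ha := mNest_spec_rho θ ρ ⟨hρr, hρs, hρt⟩ a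
  have hb := mNest_spec_rho θ ρ ⟨hρr, hρs, hρt⟩ b
  have e01 : (a 0, a 1) ∈ ρ ↔ (b 0, b 1) ∈ ρ :=
    equiv_transfer ⟨hρr, hρs, hρt⟩ (hab 0) (hab 1)
  have e12 : (a 1, a 2) ∈ ρ ↔ (b 1, b 2) ∈ ρ :=
    equiv_transfer ⟨hρr, hρs, hρt⟩ (hab 1) (hab 2)
  by_cases c01 : (a 0, a 1) ∈ ρ
  · have h1 := ha.1 c01
    have h2 := hb.1 (e01.mp c01)
    exact hρt _ _ _ h1 (hρt _ _ _ (hab 0) (hρs _ _ h2))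
  · by_cases c12 : (a 1, a 2) ∈ ρ
    · rw [ha.2.1 c01 c12, hb.2.1 (fun h => c01 (e01.mpr h)) (e12.mp c12)]
      exact hab 1
    · rw [ha.2.2 c01 c12, hb.2.2 (fun h => c01 (e01.mpr h)) (fun h => c12 (e12.mpr h))]
      exact hab 0

lemma mNest_polB_theta (θ ρ : Set (Fin k × Fin k)) (hθ : IsEquivRel θ) (hρ : IsEquivRel ρ)
    (hsub : θ ⊆ ρ) : (⟨3, mNest θ ρ⟩ : Ops k) ∈ PolB θ := by
  intro a b hab
  show (mNest θ ρ a, mNest θ ρ b) ∈ θ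
  obtain ⟨hθr, hθs, hθt⟩ := hθ
  have habρ : ∀ i, (a i, b i) ∈ ρ := fun i => hsub (hab i)
  have e01ρ : (a 0, a 1) ∈ ρ ↔ (b 0, b 1) ∈ ρ := equiv_transfer hρ (habρ 0) (habρ 1)
  have e02ρ : (a 0, a 2) ∈ ρ ↔ (b 0, b 2) ∈ ρ := equiv_transfer hρ (habρ 0) (habρ 2)
  have e12ρ : (a 1, a 2) ∈ ρ ↔ (b 1, b 2) ∈ ρ := equiv_transfer hρ (habρ 1) (habρ 2)
  have e01 : (a 0, a 1) ∈ θ ↔ (b 0, b 1) ∈ θ :=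
    equiv_transfer ⟨hθr, hθs, hθt⟩ (hab 0) (hab 1)
  have e12 : (a 1, a 2) ∈ θ ↔ (b 1, b 2) ∈ θ :=
    equiv_transfer ⟨hθr, hθs, hθt⟩ (hab 1) (hab 2)
  by_cases c1 : (a 0, a 1) ∈ ρ ∧ (a 0, a 2) ∈ ρ
  · have c1b : (b 0, b 1) ∈ ρ ∧ (b 0, b 2) ∈ ρ := ⟨e01ρ.mp c1.1, e02ρ.mp c1.2⟩
    have ha := mNest_spec_theta θ ρ ⟨hθr, hθs, hθt⟩ a c1
    have hb := mNest_spec_theta θ ρ ⟨hθr, hθs, hθt⟩ b c1b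
    by_cases c01 : (a 0, a 1) ∈ θ
    · have h1 := ha.1 c01
      have h2 := hb.1 (e01.mp c01)
      exact hθt _ _ _ h1 (hθt _ _ _ (hab 0) (hθs _ _ h2))
    · by_cases c12 : (a 1, a 2) ∈ θ
      · rw [ha.2.1 c01 c12, hb.2.1 (fun h => c01 (e01.mpr h)) (e12.mp c12)]
        exact hab 1
      · rw [ha.2.2 c01 c12, hb.2.2 (fun h => c01 (e01.mpr h)) (fun h => c12 (e12.mpr h))]
        exact hab 0
  · have c1b : ¬((b 0, b 1) ∈ ρ ∧ (b 0, b 2) ∈ ρ) := fun h =>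
      c1 ⟨e01ρ.mpr h.1, e02ρ.mpr h.2⟩
    unfold mNest
    rw [if_neg c1, if_neg c1b]
    by_cases c01 : (a 0, a 1) ∈ ρ
    · rw [if_pos c01, if_pos (e01ρ.mp c01)]; exact hab 0
    · rw [if_neg c01, if_neg (fun h => c01 (e01ρ.mpr h))]
      by_cases c12 : (a 1, a 2) ∈ ρ
      · rw [if_pos c12, if_pos (e12ρ.mp c12)]; exact hab 1
      · rw [if_neg c12, if_neg (fun h => c12 (e12ρ.mpr h))]; exact hab 0

/-- Majority operation compatible with nested equivalences `θ ⊆ ρ`. -/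
lemma nested_case (θ ρ : Set (Fin k × Fin k)) (hθ : IsEquivRel θ) (hρ : IsEquivRel ρ)
    (hsub : θ ⊆ ρ) :
    ∃ m : (Fin 3 → Fin k) → Fin k,
      (⟨3, m⟩ : Ops k) ∈ PolB θ ∩ PolB ρ ∧
      ∀ x y : Fin k, m ![x, x, y] = x ∧ m ![x, y, x] = x ∧ m ![y, x, x] = x :=
  ⟨mNest θ ρ, ⟨mNest_polB_theta θ ρ hθ hρ hsub, mNest_polB_rho θ ρ hρ⟩,
    mNest_maj θ ρ hθ hρ⟩

/-- Majority operation for complementary permuting equivalences. -/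
lemma comp_case (θ ρ : Set (Fin k × Fin k)) (hθ : IsEquivRel θ) (hρ : IsEquivRel ρ)
    (hcap : ρ ∩ θ = diag k) (hfull : relComp ρ θ = Set.univ) :
    ∃ m : (Fin 3 → Fin k) → Fin k,
      (⟨3, m⟩ : Ops k) ∈ PolB θ ∩ PolB ρ ∧
      ∀ x y : Fin k, m ![x, x, y] = x ∧ m ![x, y, x] = x ∧ m ![y, x, x] = x := by
  classical
  have hex : ∀ p q : Fin k, ∃ w, (p, w) ∈ ρ ∧ (w, q) ∈ θ := fun p q => by
    have h : ((p, q) : Fin k × Fin k) ∈ relComp ρ θ := by rw [hfull]; trivial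
    exact h
  choose f hf1 hf2 using hex
  have huniq : ∀ p q w, (p, w) ∈ ρ → (w, q) ∈ θ → f p q = w := by
    intro p q w h1 h2
    have hw : (f p q, w) ∈ ρ ∩ θ :=
      ⟨hρ.2.2 _ _ _ (hρ.2.1 _ _ (hf1 p q)) h1, hθ.2.2 _ _ _ (hf2 p q) (hθ.2.1 _ _ h2)⟩
    rw [hcap] at hw; exact hw
  refine ⟨fun x => f (if (x 0, x 1) ∈ ρ then x 0 else x 2)
      (if (x 0, x 1) ∈ θ then x 0 else x 2), ⟨?_, ?_⟩, ?_⟩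
  · intro a b hab
    show (f _ _, f _ _) ∈ θ
    have e01 : (a 0, a 1) ∈ θ ↔ (b 0, b 1) ∈ θ := equiv_transfer hθ (hab 0) (hab 1)
    have hQ : ((if (a 0, a 1) ∈ θ then a 0 else a 2),
        (if (b 0, b 1) ∈ θ then b 0 else b 2)) ∈ θ := by
      split_ifs with h h' h'
      · exact hab 0
      · exact absurd (e01.mp h) h'
      · exact absurd (e01.mpr h') h
      · exact hab 2
    exact hθ.2.2 _ _ _ (hf2 _ _) (hθ.2.2 _ _ _ hQ (hθ.2.1 _ _ (hf2 _ _)))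
  · intro a b hab
    show (f _ _, f _ _) ∈ ρ
    have e01 : (a 0, a 1) ∈ ρ ↔ (b 0, b 1) ∈ ρ := equiv_transfer hρ (hab 0) (hab 1)
    have hP : ((if (a 0, a 1) ∈ ρ then a 0 else a 2),
        (if (b 0, b 1) ∈ ρ then b 0 else b 2)) ∈ ρ := by
      split_ifs with h h' h'
      · exact hab 0
      · exact absurd (e01.mp h) h'
      · exact absurd (e01.mpr h') h
      · exact hab 2
    exact hρ.2.2 _ _ _ (hρ.2.1 _ _ (hf1 _ _)) (hρ.2.2 _ _ _ hP (hf1 _ _))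
  · intro x y
    refine ⟨?_, ?_, ?_⟩ <;>
      simp only [Matrix.cons_val_zero, Matrix.cons_val_one, Matrix.head_cons,
        Matrix.cons_val_two, Matrix.tail_cons]
    · rw [if_pos (hρ.1 x), if_pos (hθ.1 x)]
      exact huniq _ _ _ (hρ.1 x) (hθ.1 x)
    · rw [ite_self, ite_self]
      exact huniq _ _ _ (hρ.1 x) (hθ.1 x)
    · apply huniq
      · split_ifs with h
        exacts [h, hρ.1 x]
      · split_ifs with h
        exacts [hθ.2.1 _ _ h, hθ.1 x]

end AuxMaj

/-- If `θ` and `ρ` are distinct nontrivial equivalence relations satisfying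
condition (a) or (b), then `Pol(θ) ∩ Pol(ρ)` contains a majority operation. -/
theorem stmt4 (k : ℕ) (θ ρ : Set (Fin k × Fin k))
    (hθ : NontrivEquiv θ) (hρ : NontrivEquiv ρ) (hne : θ ≠ ρ)
    (hcond : (θ ⊂ ρ ∨ ρ ⊂ θ) ∨ (ρ ∩ θ = diag k ∧ relComp ρ θ = Set.univ)) :
    ∃ m : (Fin 3 → Fin k) → Fin k,
      (⟨3, m⟩ : Ops k) ∈ PolB θ ∩ PolB ρ ∧
      ∀ x y : Fin k, m ![x, x, y] = x ∧ m ![x, y, x] = x ∧ m ![y, x, x] = x := by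
  obtain ⟨hθe, -, -⟩ := hθ
  obtain ⟨hρe, -, -⟩ := hρ
  rcases hcond with (h | h) | ⟨hcap, hfull⟩
  · exact nested_case θ ρ hθe hρe h.subset
  · obtain ⟨m, ⟨h1, h2⟩, hm⟩ := nested_case ρ θ hρe hθe h.subset
    exact ⟨m, ⟨h2, h1⟩, hm⟩
  · exact comp_case θ ρ hθe hρe hcap hfull
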